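/- Let p be a prime and r ≥ 1 an integer, and let M(p^r)_{1̂,1̂} be the (p^r−1)×(p^r−1) matrix over ℚ obtained from M(p^r) by deleting the row and column indexed by 0, with remaining rows and columns indexed by i, j ∈ {1, …, p^r−1}. Then M(p^r)_{1̂,1̂} is invertible and, writing ℓ_i = ν_p(i), the (i,j) entry of its inverse equals −p^{1−2r} − ((p−1)/(p+1))·r·p^{1−2r} + p^{1−2r}·(ℓ_i·p − ℓ_i + p)²/((p+1)·(pr+p−r+1)) if i = j, and equals −p^{1−2r}·(ν_p(i−j)·p + p − ν_p(i−j))/(p+1) + p^{1−2r}·(ℓ_i·p + p − ℓ_i)·(ℓ_j·p + p − ℓ_j)/((p+1)·(pr+p−r+1)) if i ≠ j. -/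

import Mathlib

/-- `M(p^r)`: the `p^r × p^r` matrix over `ℚ` whose `(i,j)` entry is `−p^{2r−1}` if `i = j`
and `p^{2ν_p(i−j)}` otherwise, where `ν_p` is the `p`-adic valuation. -/
def Mpr (p r : ℕ) : Matrix (Fin (p ^ r)) (Fin (p ^ r)) ℚ := fun i j =>
  if i = j then -(p : ℚ) ^ (2 * r - 1)
  else (p : ℚ) ^ (2 * padicValInt p ((i : ℤ) - (j : ℤ)))

/-- `M(p^r)_{1̂,1̂}`: the matrix obtained from `M(p^r)` by deleting the row and column
indexed by `0`, with remaining rows and columns indexed by `{1, …, p^r−1}`. -/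
def MprSub (p r : ℕ) :
    Matrix {i : Fin (p ^ r) // (i : ℕ) ≠ 0} {i : Fin (p ^ r) // (i : ℕ) ≠ 0} ℚ :=
  (Mpr p r).submatrix Subtype.val Subtype.val

namespace Stmt12Proof

open Finset

lemma count_mod (a m j : ℕ) (hj : j < a) :
    ∑ k ∈ Finset.range (a * m), (if k % a = j then (1:ℚ) else 0) = m := by
  induction m with
  | zero => simp
  | succ m ih =>
    have hsplit : Finset.range (a * (m+1)) = Finset.range (a*m) ∪ Finset.Ico (a*m) (a*m+a) := by
      rw [Finset.range_eq_Ico, Finset.range_eq_Ico, show a*(m+1) = a*m+a by ring,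
        Finset.Ico_union_Ico_eq_Ico (Nat.zero_le _) (by omega)]
    rw [hsplit, Finset.sum_union (by
      rw [Finset.range_eq_Ico]
      exact Finset.Ico_disjoint_Ico_consecutive 0 (a*m) (a*m+a)), ih]
    have h2 : ∑ k ∈ Finset.Ico (a*m) (a*m+a), (if k % a = j then (1:ℚ) else 0) = 1 := by
      rw [Finset.sum_Ico_eq_sum_range]
      have h1 : ∀ u ∈ Finset.range (a*m+a-(a*m)), (if (a*m+u) % a = j then (1:ℚ) else 0)
          = if u = j then (1:ℚ) else 0 := by
        intro u hu
        simp only [Finset.mem_range] at hu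
        rw [Nat.mul_add_mod, Nat.mod_eq_of_lt (by omega)]
      rw [Finset.sum_congr rfl h1, show a*m+a-(a*m) = a by omega,
        Finset.sum_ite_eq' (Finset.range a) j (fun _ => (1:ℚ))]
      simp [hj]
    rw [h2]; push_cast; ring

variable {p r : ℕ}

lemma sum_ind (hp : p.Prime) (t : ℕ) (ht : t ≤ r) (j : Fin (p^r)) :
    ∑ k : Fin (p^r), (if ((p:ℤ))^t ∣ ((k:ℤ) - ((j:ℕ):ℤ)) then (1:ℚ) else 0)
      = (p:ℚ)^(r-t) := by
  rw [Fin.sum_univ_eq_sum_range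
    (fun k => if ((p:ℤ))^t ∣ ((k:ℤ) - ((j:ℕ):ℤ)) then (1:ℚ) else 0) (p^r)]
  have hcond : ∀ k : ℕ, (((p:ℤ))^t ∣ ((k:ℤ) - ((j:ℕ):ℤ))) ↔ (k % p^t = (j:ℕ) % p^t) := by
    intro k
    rw [show ((p:ℤ))^t = ((p^t : ℕ) : ℤ) by push_cast; ring, ← Nat.modEq_iff_dvd]
    exact ⟨fun h => h.symm, fun h => h.symm⟩
  rw [Finset.sum_congr rfl (fun k _ => by simp only [hcond] :
    ∀ k ∈ Finset.range (p^r), (if ((p:ℤ))^t ∣ ((k:ℤ) - ((j:ℕ):ℤ)) then (1:ℚ) else 0)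
      = if k % p^t = (j:ℕ) % p^t then (1:ℚ) else 0),
    show Finset.range (p^r) = Finset.range (p^t * p^(r-t)) by rw [← pow_add, Nat.add_sub_cancel' ht],
    count_mod _ _ _ (Nat.mod_lt _ (pow_pos hp.pos t))]
  push_cast; ring

lemma sum_ind' (hp : p.Prime) (s : ℕ) (hs : s ≤ r) (i : Fin (p^r)) :
    ∑ k : Fin (p^r), (if ((p:ℤ))^s ∣ (((i:ℕ):ℤ) - (k:ℤ)) then (1:ℚ) else 0)
      = (p:ℚ)^(r-s) := by
  rw [Finset.sum_congr rfl (fun k _ => if_congr dvd_sub_comm rfl rfl)]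
  exact sum_ind hp s hs i

/-- L2, case s ≤ t -/
lemma sum_two_le (hp : p.Prime) (s t : ℕ) (hst : s ≤ t) (ht : t ≤ r) (i j : Fin (p^r)) :
    ∑ k : Fin (p^r), (if ((p:ℤ))^s ∣ (((i:ℕ):ℤ) - (k:ℤ)) then (1:ℚ) else 0)
        * (if ((p:ℤ))^t ∣ ((k:ℤ) - ((j:ℕ):ℤ)) then (1:ℚ) else 0)
      = (p:ℚ)^(r-t) * (if ((p:ℤ))^s ∣ (((i:ℕ):ℤ) - ((j:ℕ):ℤ)) then (1:ℚ) else 0) := by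
  have hpt : ∀ k : Fin (p^r),
      (if ((p:ℤ))^s ∣ (((i:ℕ):ℤ) - (k:ℤ)) then (1:ℚ) else 0)
        * (if ((p:ℤ))^t ∣ ((k:ℤ) - ((j:ℕ):ℤ)) then (1:ℚ) else 0)
      = (if ((p:ℤ))^s ∣ (((i:ℕ):ℤ) - ((j:ℕ):ℤ)) then (1:ℚ) else 0)
        * (if ((p:ℤ))^t ∣ ((k:ℤ) - ((j:ℕ):ℤ)) then (1:ℚ) else 0) := by
    intro k
    by_cases h : ((p:ℤ))^t ∣ ((k:ℤ) - ((j:ℕ):ℤ))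
    · have hs' : ((p:ℤ))^s ∣ ((k:ℤ) - ((j:ℕ):ℤ)) := (pow_dvd_pow _ hst).trans h
      have hiff : (((p:ℤ))^s ∣ (((i:ℕ):ℤ) - (k:ℤ))) ↔ (((p:ℤ))^s ∣ (((i:ℕ):ℤ) - ((j:ℕ):ℤ))) := by
        constructor
        · intro hh
          have := dvd_add hh hs'
          rwa [sub_add_sub_cancel] at this
        · intro hh
          have := dvd_sub hh hs'
          rwa [show (((i:ℕ):ℤ) - ((j:ℕ):ℤ)) - ((k:ℤ) - ((j:ℕ):ℤ)) = ((i:ℕ):ℤ) - (k:ℤ) by ring] at this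
      rw [if_congr hiff rfl rfl]
    · simp [h]
  rw [Finset.sum_congr rfl (fun k _ => hpt k), ← Finset.mul_sum, sum_ind hp t ht j]
  ring

/-- L2, case t ≤ s -/
lemma sum_two_ge (hp : p.Prime) (s t : ℕ) (hst : t ≤ s) (hs : s ≤ r) (i j : Fin (p^r)) :
    ∑ k : Fin (p^r), (if ((p:ℤ))^s ∣ (((i:ℕ):ℤ) - (k:ℤ)) then (1:ℚ) else 0)
        * (if ((p:ℤ))^t ∣ ((k:ℤ) - ((j:ℕ):ℤ)) then (1:ℚ) else 0)
      = (p:ℚ)^(r-s) * (if ((p:ℤ))^t ∣ (((i:ℕ):ℤ) - ((j:ℕ):ℤ)) then (1:ℚ) else 0) := by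
  have hpt : ∀ k : Fin (p^r),
      (if ((p:ℤ))^s ∣ (((i:ℕ):ℤ) - (k:ℤ)) then (1:ℚ) else 0)
        * (if ((p:ℤ))^t ∣ ((k:ℤ) - ((j:ℕ):ℤ)) then (1:ℚ) else 0)
      = (if ((p:ℤ))^s ∣ (((i:ℕ):ℤ) - (k:ℤ)) then (1:ℚ) else 0)
        * (if ((p:ℤ))^t ∣ (((i:ℕ):ℤ) - ((j:ℕ):ℤ)) then (1:ℚ) else 0) := by
    intro k
    by_cases h : ((p:ℤ))^s ∣ (((i:ℕ):ℤ) - (k:ℤ))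
    · have ht' : ((p:ℤ))^t ∣ (((i:ℕ):ℤ) - (k:ℤ)) := (pow_dvd_pow _ hst).trans h
      have hiff : (((p:ℤ))^t ∣ ((k:ℤ) - ((j:ℕ):ℤ))) ↔ (((p:ℤ))^t ∣ (((i:ℕ):ℤ) - ((j:ℕ):ℤ))) := by
        constructor
        · intro hh
          have := dvd_add ht' hh
          rwa [sub_add_sub_cancel] at this
        · intro hh
          have := dvd_sub hh ht'
          rwa [show (((i:ℕ):ℤ) - ((j:ℕ):ℤ)) - (((i:ℕ):ℤ) - (k:ℤ)) = (k:ℤ) - ((j:ℕ):ℤ) by ring] at this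
      rw [if_congr hiff rfl rfl]
    · simp [h]
  rw [Finset.sum_congr rfl (fun k _ => hpt k), ← Finset.sum_mul, sum_ind' hp s hs i]


lemma val_dvd_iff (hp : p.Prime) {x : ℤ} (hx : x ≠ 0) (s : ℕ) :
    ((p:ℤ)^s ∣ x) ↔ s ≤ padicValInt p x := by
  haveI := Fact.mk hp
  rw [padicValInt_dvd_iff]
  simp [hx]

lemma fin_sub_ne (i k : Fin (p^r)) (h : i ≠ k) : ((i:ℕ):ℤ) - ((k:ℕ):ℤ) ≠ 0 := by
  intro hc
  exact h (Fin.ext (by omega))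

lemma val_lt (hp : p.Prime) {i k : Fin (p^r)} (h : i ≠ k) :
    padicValInt p (((i:ℕ):ℤ) - ((k:ℕ):ℤ)) < r := by
  by_contra hc
  push_neg at hc
  have hdvd : (p:ℤ)^r ∣ (((i:ℕ):ℤ) - ((k:ℕ):ℤ)) :=
    (val_dvd_iff hp (fin_sub_ne i k h) r).2 hc
  have h1 : ((p^r : ℕ):ℤ) ∣ (((i:ℕ):ℤ) - ((k:ℕ):ℤ)) := by push_cast; exact hdvd
  have h2 : ((p^r : ℕ):ℤ) ≤ |(((i:ℕ):ℤ) - ((k:ℕ):ℤ))| :=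
    Int.le_of_dvd (abs_pos.2 (fin_sub_ne i k h)) ((dvd_abs _ _).2 h1)
  have h3 : (i:ℕ) < p^r := i.isLt
  have h4 : (k:ℕ) < p^r := k.isLt
  rcases abs_cases (((i:ℕ):ℤ) - ((k:ℕ):ℤ)) with ⟨he, _⟩ | ⟨he, _⟩ <;> rw [he] at h2 <;>
    [skip; skip] <;> omega

/-- coefficients -/
def Cc (p : ℕ) : ℕ → ℚ
  | 0 => 1
  | (s+1) => (p:ℚ)^(2*s+2) - (p:ℚ)^(2*s)

lemma sum_Cc (v : ℕ) : ∑ s ∈ Finset.range (v+1), Cc p s = (p:ℚ)^(2*v) := by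
  induction v with
  | zero => simp [Cc]
  | succ v ih =>
    rw [Finset.sum_range_succ, ih]
    show (p:ℚ)^(2*v) + ((p:ℚ)^(2*v+2) - (p:ℚ)^(2*v)) = (p:ℚ)^(2*(v+1))
    ring_nf

lemma sum_ite_le (F : ℕ → ℚ) (v R : ℕ) (hv : v < R) :
    ∑ s ∈ Finset.range R, (if s ≤ v then F s else 0) = ∑ s ∈ Finset.range (v+1), F s := by
  rw [← Finset.sum_subset (Finset.range_subset_range.2 (by omega : v+1 ≤ R))
    (fun x _ hx => by rw [if_neg (by simp at hx; omega)])]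
  exact Finset.sum_congr rfl (fun x hx => by rw [if_pos (by simp at hx; omega)])

lemma Mpr_eq (hp : p.Prime) (hr : 1 ≤ r) (i k : Fin (p^r)) :
    Mpr p r i k
      = (∑ s ∈ Finset.range r, Cc p s *
          (if ((p:ℤ))^s ∣ (((i:ℕ):ℤ) - ((k:ℕ):ℤ)) then (1:ℚ) else 0))
        + (-((p:ℚ)^(2*r-1) + (p:ℚ)^(2*r-2))) * (if k = i then 1 else 0) := by
  obtain ⟨r1, rfl⟩ : ∃ r1, r = r1+1 := ⟨r-1, by omega⟩
  by_cases hik : i = k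
  · subst hik
    rw [Mpr, if_pos rfl, if_pos rfl,
      Finset.sum_congr rfl (fun s _ => by rw [if_pos (by simp : ((p:ℤ))^s ∣ (((i:ℕ):ℤ) - ((i:ℕ):ℤ)))]),
      Finset.sum_congr rfl (fun s _ => (mul_one _)), sum_Cc,
      show 2*(r1+1)-1 = 2*r1+1 by omega, show 2*(r1+1)-2 = 2*r1 by omega]
    ring
  · have hν : padicValInt p (((i:ℕ):ℤ) - ((k:ℕ):ℤ)) < r1+1 := val_lt hp hik
    set ν := padicValInt p (((i:ℕ):ℤ) - ((k:ℕ):ℤ)) with hνdef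
    rw [Mpr, if_neg hik, if_neg (fun h => hik (h.symm)), mul_zero, add_zero,
      Finset.sum_congr rfl (fun s _ => by
        rw [if_congr (val_dvd_iff hp (fin_sub_ne i k hik) s) rfl rfl, mul_ite, mul_one, mul_zero]),
      sum_ite_le (Cc p) ν (r1+1) hν, sum_Cc]
lemma test_coe (i k : Fin (p^r)) : padicValInt p ((i:ℤ) - (k:ℤ)) = padicValInt p (((i:ℕ):ℤ) - ((k:ℕ):ℤ)) := rfl

noncomputable def Hmat (p r : ℕ) : Matrix (Fin (p^r)) (Fin (p^r)) ℚ := fun i j =>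
  (-1/(((p:ℚ)+1) * (p:ℚ)^(2*r-1))) *
  (if i = j then (r:ℚ)*((p:ℚ)-1) + (p:ℚ) + 1
   else (padicValInt p ((i : ℤ) - (j : ℤ)) : ℚ) * ((p:ℚ)-1) + (p:ℚ))

lemma Hmat_eq (hp : p.Prime) (hr : 1 ≤ r) (k j : Fin (p^r)) :
    Hmat p r k j = (-1/(((p:ℚ)+1)*(p:ℚ)^(2*r-1))) *
      (1 + ((p:ℚ)-1) * (∑ t ∈ Finset.range r,
          (if ((p:ℤ))^t ∣ (((k:ℕ):ℤ) - ((j:ℕ):ℤ)) then (1:ℚ) else 0))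
        + (p:ℚ) * (if k = j then 1 else 0)) := by
  by_cases hkj : k = j
  · subst hkj
    rw [Hmat, if_pos rfl, if_pos rfl,
      Finset.sum_congr rfl (fun t _ => by
        rw [if_pos (by simp : ((p:ℤ))^t ∣ (((k:ℕ):ℤ) - ((k:ℕ):ℤ)))]),
      Finset.sum_const, Finset.card_range]
    push_cast; ring
  · have hν : padicValInt p (((k:ℕ):ℤ) - ((j:ℕ):ℤ)) < r := val_lt hp hkj
    set ν := padicValInt p (((k:ℕ):ℤ) - ((j:ℕ):ℤ)) with hνdef
    rw [Hmat, if_neg hkj, if_neg hkj,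
      Finset.sum_congr rfl (fun t _ => by
        rw [if_congr (val_dvd_iff hp (fin_sub_ne k j hkj) t) rfl rfl]),
      show (∑ t ∈ Finset.range r, if t ≤ ν then (1:ℚ) else 0) = ∑ t ∈ Finset.range (ν+1), (1:ℚ)
        from sum_ite_le (fun _ => (1:ℚ)) ν r hν,
      Finset.sum_const, Finset.card_range]
    push_cast; ring

lemma W_eval (hp1 : (p:ℚ) ≠ 1) (r1 s : ℕ) (hs : s ≤ r1) :
    ((p:ℚ)-1) * ∑ t ∈ Finset.Ico (s+1) (r1+1), (p:ℚ)^((r1+1)-t)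
      = (p:ℚ)^((r1+1)-s) - (p:ℚ) := by
  obtain ⟨m, rfl⟩ : ∃ m, r1 = s + m := ⟨r1 - s, by omega⟩
  rw [Finset.sum_Ico_eq_sum_range, show (s+m+1) - (s+1) = m by omega]
  have h1 : ∀ k ∈ Finset.range m, (p:ℚ)^((s+m+1)-((s+1)+k)) = (p:ℚ)^((m-1-k)+1) := by
    intro k hk; simp only [Finset.mem_range] at hk; congr 1; omega
  rw [Finset.sum_congr rfl h1, Finset.sum_range_reflect (fun k => (p:ℚ)^(k+1)) m,
    show (s+m+1)-s = m+1 by omega]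
  have h2 : ∑ k ∈ Finset.range m, (p:ℚ)^(k+1) = (∑ k ∈ Finset.range m, (p:ℚ)^k) * (p:ℚ) := by
    rw [Finset.sum_mul]; exact Finset.sum_congr rfl fun k _ => pow_succ _ _
  rw [h2]
  have hg := geom_sum_mul ((p:ℚ)) m
  linear_combination (p:ℚ) * hg

lemma beta_eval (hp1 : (p:ℚ) ≠ 1) (r1 s1 : ℕ) (hs : s1 ≤ r1) :
    (∑ s ∈ Finset.Ico (s1+1) (r1+1), Cc p s * (p:ℚ)^((r1+1)-s))
        + (-((p:ℚ)^(2*(r1+1)-1) + (p:ℚ)^(2*(r1+1)-2)))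
      = -((p:ℚ)+1) * (p:ℚ)^(r1+s1) := by
  obtain ⟨m, rfl⟩ : ∃ m, r1 = s1 + m := ⟨r1 - s1, by omega⟩
  rw [Finset.sum_Ico_eq_sum_range, show (s1+m+1) - (s1+1) = m by omega]
  have h1 : ∀ k ∈ Finset.range m, Cc p ((s1+1)+k) * (p:ℚ)^((s1+m+1)-((s1+1)+k))
      = ((p:ℚ)^2 - 1) * ((p:ℚ)^(2*s1+m) * (p:ℚ)^k) := by
    intro k hk; simp only [Finset.mem_range] at hk
    rw [show (s1+1)+k = (s1+k)+1 by omega]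
    show ((p:ℚ)^(2*(s1+k)+2) - (p:ℚ)^(2*(s1+k))) * (p:ℚ)^((s1+m+1)-((s1+k)+1)) = _
    have e1 : (p:ℚ)^(2*(s1+k)+2) * (p:ℚ)^((s1+m+1)-((s1+k)+1))
        = (p:ℚ)^2 * ((p:ℚ)^(2*s1+m) * (p:ℚ)^k) := by
      rw [← pow_add, ← pow_add, ← pow_add]; congr 1; omega
    have e2 : (p:ℚ)^(2*(s1+k)) * (p:ℚ)^((s1+m+1)-((s1+k)+1))
        = (p:ℚ)^(2*s1+m) * (p:ℚ)^k := by
      rw [← pow_add, ← pow_add]; congr 1; omega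
    linear_combination e1 - e2
  rw [Finset.sum_congr rfl h1, ← Finset.mul_sum, ← Finset.mul_sum,
    show 2*((s1+m)+1)-1 = 2*s1+2*m+1 by omega, show 2*((s1+m)+1)-2 = 2*s1+2*m by omega,
    show (s1+m)+s1 = 2*s1+m by omega]
  have hg := geom_sum_mul ((p:ℚ)) m
  linear_combination ((p:ℚ)+1) * (p:ℚ)^(2*s1+m) * hg

lemma beta0_eval (hp1 : (p:ℚ) ≠ 1) (r1 : ℕ) :
    (∑ s ∈ Finset.Ico 0 (r1+1), Cc p s * (p:ℚ)^((r1+1)-s))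
        + (-((p:ℚ)^(2*(r1+1)-1) + (p:ℚ)^(2*(r1+1)-2)))
      = -(p:ℚ)^r1 := by
  rw [Finset.sum_eq_sum_Ico_succ_bot (by omega : 0 < r1+1)]
  have hb := beta_eval hp1 r1 0 (Nat.zero_le _)
  rw [show Cc p 0 = 1 from rfl, one_mul, show (r1+1)-0 = r1+1 by omega]
  linear_combination hb

lemma swap_sum (R : ℕ) (F : ℕ → ℚ) :
    ∑ t ∈ Finset.range R, (p:ℚ)^(R-t) * ∑ s ∈ Finset.range t, F s
      = ∑ s ∈ Finset.range R, F s * ∑ t ∈ Finset.Ico (s+1) R, (p:ℚ)^(R-t) := by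
  have step1 : ∀ t ∈ Finset.range R,
      (p:ℚ)^(R-t) * ∑ s ∈ Finset.range t, F s
        = ∑ s ∈ Finset.range R, (if s < t then (p:ℚ)^(R-t) * F s else 0) := by
    intro t ht
    simp only [Finset.mem_range] at ht
    rw [← Finset.sum_filter,
      show (Finset.range R).filter (fun s => s < t) = Finset.range t by
        ext x; simp [Finset.mem_filter, Finset.mem_range]; omega,
      Finset.mul_sum]
  rw [Finset.sum_congr rfl step1, Finset.sum_comm]
  refine Finset.sum_congr rfl fun s hs => ?_
  rw [← Finset.sum_filter,
    show (Finset.range R).filter (fun t => s < t) = Finset.Ico (s+1) R by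
      ext x; simp [Finset.mem_filter, Finset.mem_range, Finset.mem_Ico]; omega,
    Finset.mul_sum]
  exact Finset.sum_congr rfl fun t _ => mul_comm _ _

lemma key (hp : p.Prime) (hr : 1 ≤ r) (i j : Fin (p^r)) :
    ∑ k : Fin (p^r), Mpr p r i k * Hmat p r k j = if i = j then (1:ℚ) else 0 := by
  obtain ⟨r1, rfl⟩ : ∃ r1, r = r1+1 := ⟨r-1, by omega⟩
  have hq0 : (p:ℚ) ≠ 0 := Nat.cast_ne_zero.2 hp.ne_zero
  have hq1 : (p:ℚ) ≠ 1 := by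
    have := hp.two_le
    intro h
    have : ((p:ℕ):ℚ) = ((1:ℕ):ℚ) := by push_cast; exact h
    have := Nat.cast_injective this
    omega
  have hq2 : (p:ℚ) + 1 ≠ 0 := by positivity
  -- abbreviations
  set q : ℚ := (p:ℚ) with hqdef
  set dd : ℚ := -(q^(2*(r1+1)-1) + q^(2*(r1+1)-2)) with hdd
  set α : ℚ := -1/((q+1) * q^(2*(r1+1)-1)) with hα
  set I : ℕ → ℚ := fun s => if ((p:ℤ))^s ∣ (((i:ℕ):ℤ) - ((j:ℕ):ℤ)) then (1:ℚ) else 0 with hI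
  -- step: T t
  have hT : ∀ t, t ≤ r1+1 →
      (∑ k : Fin (p^(r1+1)), Mpr p (r1+1) i k *
        (if ((p:ℤ))^t ∣ (((k:ℕ):ℤ) - ((j:ℕ):ℤ)) then (1:ℚ) else 0))
      = q^((r1+1)-t) * (∑ s ∈ Finset.range t, Cc p s * I s)
        + ((∑ s ∈ Finset.Ico t (r1+1), Cc p s * q^((r1+1)-s)) + dd) * I t := by
    intro t ht
    have step1 : ∀ k : Fin (p^(r1+1)), Mpr p (r1+1) i k *
        (if ((p:ℤ))^t ∣ (((k:ℕ):ℤ) - ((j:ℕ):ℤ)) then (1:ℚ) else 0)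
      = (∑ s ∈ Finset.range (r1+1), Cc p s *
          ((if ((p:ℤ))^s ∣ (((i:ℕ):ℤ) - ((k:ℕ):ℤ)) then (1:ℚ) else 0) *
           (if ((p:ℤ))^t ∣ (((k:ℕ):ℤ) - ((j:ℕ):ℤ)) then (1:ℚ) else 0)))
        + dd * (if k = i then (if ((p:ℤ))^t ∣ (((k:ℕ):ℤ) - ((j:ℕ):ℤ)) then (1:ℚ) else 0) else 0) := by
      intro k
      rw [Mpr_eq hp (by omega) i k, add_mul, Finset.sum_mul]
      congr 1
      · exact Finset.sum_congr rfl fun s _ => by ring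
      · rw [mul_assoc, boole_mul]
    rw [Finset.sum_congr rfl (fun k _ => step1 k), Finset.sum_add_distrib, ← Finset.mul_sum,
      Finset.sum_ite_eq' Finset.univ i, if_pos (Finset.mem_univ i), Finset.sum_comm]
    have step2 : ∀ s ∈ Finset.range (r1+1),
        (∑ k : Fin (p^(r1+1)), Cc p s *
          ((if ((p:ℤ))^s ∣ (((i:ℕ):ℤ) - ((k:ℕ):ℤ)) then (1:ℚ) else 0) *
           (if ((p:ℤ))^t ∣ (((k:ℕ):ℤ) - ((j:ℕ):ℤ)) then (1:ℚ) else 0)))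
        = Cc p s * (∑ k : Fin (p^(r1+1)),
            (if ((p:ℤ))^s ∣ (((i:ℕ):ℤ) - ((k:ℕ):ℤ)) then (1:ℚ) else 0) *
            (if ((p:ℤ))^t ∣ (((k:ℕ):ℤ) - ((j:ℕ):ℤ)) then (1:ℚ) else 0)) := by
      intro s _; rw [Finset.mul_sum]
    rw [Finset.sum_congr rfl step2]
    rw [Finset.range_eq_Ico, ← Finset.sum_Ico_consecutive _ (Nat.zero_le t) ht]
    have step3 : ∀ s ∈ Finset.Ico 0 t,
        Cc p s * (∑ k : Fin (p^(r1+1)),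
            (if ((p:ℤ))^s ∣ (((i:ℕ):ℤ) - ((k:ℕ):ℤ)) then (1:ℚ) else 0) *
            (if ((p:ℤ))^t ∣ (((k:ℕ):ℤ) - ((j:ℕ):ℤ)) then (1:ℚ) else 0))
        = q^((r1+1)-t) * (Cc p s * I s) := by
      intro s hs
      simp only [Finset.mem_Ico] at hs
      rw [sum_two_le hp s t (by omega) ht i j]
      ring
    have step4 : ∀ s ∈ Finset.Ico t (r1+1),
        Cc p s * (∑ k : Fin (p^(r1+1)),
            (if ((p:ℤ))^s ∣ (((i:ℕ):ℤ) - ((k:ℕ):ℤ)) then (1:ℚ) else 0) *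
            (if ((p:ℤ))^t ∣ (((k:ℕ):ℤ) - ((j:ℕ):ℤ)) then (1:ℚ) else 0))
        = (Cc p s * q^((r1+1)-s)) * I t := by
      intro s hs
      simp only [Finset.mem_Ico] at hs
      rw [sum_two_ge hp s t (by omega) (by omega) i j]
      ring
    rw [Finset.sum_congr rfl step3, Finset.sum_congr rfl step4, ← Finset.mul_sum,
      ← Finset.sum_mul, ← Finset.range_eq_Ico]
    ring
  -- pointwise expansion of Hmat
  have hexp : ∀ k : Fin (p^(r1+1)), Mpr p (r1+1) i k * Hmat p (r1+1) k j
      = α * (Mpr p (r1+1) i k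
          + (q-1) * (∑ t ∈ Finset.range (r1+1), Mpr p (r1+1) i k *
              (if ((p:ℤ))^t ∣ (((k:ℕ):ℤ) - ((j:ℕ):ℤ)) then (1:ℚ) else 0))
          + q * (if k = j then Mpr p (r1+1) i k else 0)) := by
    intro k
    rw [Hmat_eq hp (by omega) k j, ← Finset.mul_sum]
    have hb : Mpr p (r1+1) i k * (if k = j then (1:ℚ) else 0)
        = (if k = j then Mpr p (r1+1) i k else 0) := mul_boole _ _
    set S : ℚ := ∑ t ∈ Finset.range (r1+1),
      (if ((p:ℤ))^t ∣ (((k:ℕ):ℤ) - ((j:ℕ):ℤ)) then (1:ℚ) else 0) with hS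
    linear_combination (α * q) * hb
  rw [Finset.sum_congr rfl (fun k _ => hexp k), ← Finset.mul_sum, Finset.sum_add_distrib,
    Finset.sum_add_distrib, ← Finset.mul_sum, ← Finset.mul_sum,
    Finset.sum_ite_eq' Finset.univ j, if_pos (Finset.mem_univ j)]
  -- swap the k,t double sum
  have hswap0 : (∑ k : Fin (p^(r1+1)), ∑ t ∈ Finset.range (r1+1), Mpr p (r1+1) i k *
        (if ((p:ℤ))^t ∣ (((k:ℕ):ℤ) - ((j:ℕ):ℤ)) then (1:ℚ) else 0))
      = ∑ t ∈ Finset.range (r1+1), ∑ k : Fin (p^(r1+1)), Mpr p (r1+1) i k *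
        (if ((p:ℤ))^t ∣ (((k:ℕ):ℤ) - ((j:ℕ):ℤ)) then (1:ℚ) else 0) := Finset.sum_comm
  rw [hswap0]
  -- row sum
  have hI0 : I 0 = 1 := by
    rw [hI]
    simp
  have hrow : (∑ k : Fin (p^(r1+1)), Mpr p (r1+1) i k) = -q^r1 := by
    have h0 := hT 0 (by omega)
    rw [Finset.range_zero, Finset.sum_empty, mul_zero, zero_add, hI0, mul_one] at h0
    have hb0 := beta0_eval (p := p) hq1 r1
    calc (∑ k : Fin (p^(r1+1)), Mpr p (r1+1) i k)
        = ∑ k : Fin (p^(r1+1)), Mpr p (r1+1) i k *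
            (if ((p:ℤ))^0 ∣ (((k:ℕ):ℤ) - ((j:ℕ):ℤ)) then (1:ℚ) else 0) := by
          refine Finset.sum_congr rfl fun k _ => ?_
          rw [if_pos (by simp), mul_one]
      _ = (∑ s ∈ Finset.Ico 0 (r1+1), Cc p s * q^((r1+1)-s)) + dd := h0
      _ = -q^r1 := hb0
  rw [hrow]
  -- apply hT to each t
  have happ : ∀ t ∈ Finset.range (r1+1),
      (∑ k : Fin (p^(r1+1)), Mpr p (r1+1) i k *
        (if ((p:ℤ))^t ∣ (((k:ℕ):ℤ) - ((j:ℕ):ℤ)) then (1:ℚ) else 0))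
      = q^((r1+1)-t) * (∑ s ∈ Finset.range t, Cc p s * I s)
        + ((∑ s ∈ Finset.Ico t (r1+1), Cc p s * q^((r1+1)-s)) + dd) * I t := by
    intro t ht
    simp only [Finset.mem_range] at ht
    exact hT t (by omega)
  rw [Finset.sum_congr rfl happ, Finset.sum_add_distrib,
    swap_sum (r1+1) (fun s => Cc p s * I s)]
  -- Mpr i j decomposition
  rw [Mpr_eq hp (by omega) i j]
  -- now a single-variable sum identity
  have hcomb : (q-1) * ((∑ s ∈ Finset.range (r1+1), (Cc p s * I s) *
          (∑ t ∈ Finset.Ico (s+1) (r1+1), q^((r1+1)-t)))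
        + ∑ t ∈ Finset.range (r1+1),
            ((∑ s ∈ Finset.Ico t (r1+1), Cc p s * q^((r1+1)-s)) + dd) * I t)
      + q * ((∑ s ∈ Finset.range (r1+1), Cc p s *
          (if ((p:ℤ))^s ∣ (((i:ℕ):ℤ) - ((j:ℕ):ℤ)) then (1:ℚ) else 0)))
      = q^r1 := by
    rw [mul_add, Finset.mul_sum, Finset.mul_sum, Finset.mul_sum, ← Finset.sum_add_distrib,
      ← Finset.sum_add_distrib]
    have hterm : ∀ s ∈ Finset.range (r1+1),
        ((q-1) * ((Cc p s * I s) * (∑ t ∈ Finset.Ico (s+1) (r1+1), q^((r1+1)-t)))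
          + (q-1) * (((∑ u ∈ Finset.Ico s (r1+1), Cc p u * q^((r1+1)-u)) + dd) * I s))
          + q * (Cc p s * (if ((p:ℤ))^s ∣ (((i:ℕ):ℤ) - ((j:ℕ):ℤ)) then (1:ℚ) else 0))
        = if s = 0 then q^r1 else 0 := by
      intro s hs
      simp only [Finset.mem_range] at hs
      have hIs : (if ((p:ℤ))^s ∣ (((i:ℕ):ℤ) - ((j:ℕ):ℤ)) then (1:ℚ) else 0) = I s := by rw [hI]
      rw [hIs]
      rcases s with _ | s1
      · -- s = 0
        rw [if_pos rfl, hI0]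
        have hW := W_eval (p := p) hq1 r1 0 (Nat.zero_le _)
        have hb0 := beta0_eval (p := p) hq1 r1
        rw [show Cc p 0 = 1 from rfl]
        rw [show ((r1+1)-0) = r1+1 by omega] at hW
        linear_combination hW + (q-1) * hb0
      · -- s = s1+1
        rw [if_neg (by omega)]
        have hs1 : s1 ≤ r1 := by omega
        obtain ⟨m, hm⟩ : ∃ m, r1 = s1 + m := ⟨r1 - s1, by omega⟩
        have hW := W_eval (p := p) hq1 r1 (s1+1) (by omega)
        have hβ := beta_eval (p := p) hq1 r1 s1 hs1
        rw [show Cc p (s1+1) = q^(2*s1+2) - q^(2*s1) from rfl]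
        subst hm
        rw [show (s1+m+1)-(s1+1) = m by omega] at hW
        rw [show (s1+m)+s1 = 2*s1+m by omega] at hβ
        linear_combination (q^(2*s1+2) - q^(2*s1)) * I (s1+1) * hW + (q-1) * I (s1+1) * hβ
    rw [Finset.sum_congr rfl hterm, Finset.sum_ite_eq' (Finset.range (r1+1)) 0 (fun _ => q^r1),
      if_pos (by simp)]
  -- final assembly
  have hαdd : α * (q * dd) = 1 := by
    rw [hα, hdd, show 2*(r1+1)-1 = 2*r1+1 by omega, show 2*(r1+1)-2 = 2*r1 by omega]
    field_simp
    ring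
  have hδ : (if j = i then (1:ℚ) else 0) = (if i = j then (1:ℚ) else 0) :=
    if_congr eq_comm rfl rfl
  rw [hδ]
  linear_combination α * hcomb + (if i = j then (1:ℚ) else 0) * hαdd

lemma padic_nat (k : Fin (p^r)) : padicValInt p ((k:ℤ)) = padicValNat p (k:ℕ) := by
  simp [padicValInt]

lemma padic_neg (x : ℤ) : padicValInt p (-x) = padicValInt p x := by
  simp [padicValInt]

section Sub

def zeroF (p r : ℕ) (hp : p.Prime) : Fin (p^r) := ⟨0, pow_pos hp.pos r⟩

noncomputable def gg (p : ℕ) (k : Fin (p^r)) : ℚ :=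
  (padicValNat p (k:ℕ) : ℚ) * ((p:ℚ)-1) + (p:ℚ)

lemma Hmat_col0 (hp : p.Prime) (k : Fin (p^r)) :
    Hmat p r k (zeroF p r hp)
      = (-1/(((p:ℚ)+1) * (p:ℚ)^(2*r-1))) *
        (if k = zeroF p r hp then (r:ℚ)*((p:ℚ)-1) + (p:ℚ) + 1 else gg p k) := by
  by_cases hk : k = zeroF p r hp
  · rw [Hmat, if_pos hk, if_pos hk]
  · rw [Hmat, if_neg hk, if_neg hk]
    simp only [gg]
    rw [show ((zeroF p r hp : Fin (p^r)) : ℤ) = (0:ℤ) from rfl, sub_zero, padic_nat]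

lemma Hmat_row0 (hp : p.Prime) (j : Fin (p^r)) (hj : j ≠ zeroF p r hp) :
    Hmat p r (zeroF p r hp) j
      = (-1/(((p:ℚ)+1) * (p:ℚ)^(2*r-1))) * gg p j := by
  rw [Hmat, if_neg (fun h => hj h.symm)]
  simp only [gg]
  rw [show ((zeroF p r hp : Fin (p^r)) : ℤ) = (0:ℤ) from rfl, zero_sub, padic_neg, padic_nat]

lemma sum_split (hp : p.Prime) (f : Fin (p^r) → ℚ) :
    ∑ k : {x : Fin (p^r) // (x:ℕ) ≠ 0}, f k.1
      = (∑ k : Fin (p^r), f k) - f (zeroF p r hp) := by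
  classical
  have h1 : ∑ k ∈ Finset.univ.filter (fun x : Fin (p^r) => (x:ℕ) ≠ 0), f k
      = ∑ k : {x : Fin (p^r) // (x:ℕ) ≠ 0}, f k.1 :=
    Finset.sum_subtype _ (by simp) f
  rw [← h1,
    show Finset.univ.filter (fun x : Fin (p^r) => (x:ℕ) ≠ 0)
        = Finset.univ.erase (zeroF p r hp) by
      ext x
      simp only [Finset.mem_filter, Finset.mem_erase, Finset.mem_univ, and_true, true_and]
      constructor
      · intro h he; exact h (by rw [he]; rfl)
      · intro h hv; exact h (Fin.ext hv),
    Finset.sum_erase_eq_sub (Finset.mem_univ _)]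

noncomputable def Nmat (p r : ℕ) :
    Matrix {i : Fin (p ^ r) // (i : ℕ) ≠ 0} {i : Fin (p ^ r) // (i : ℕ) ≠ 0} ℚ :=
  fun i j => Hmat p r i.1 j.1
    + (1/(((p:ℚ)+1) * (p:ℚ)^(2*r-1) * ((r:ℚ)*((p:ℚ)-1) + (p:ℚ) + 1)))
      * gg p i.1 * gg p j.1

lemma G0_ne (hp : p.Prime) (hr : 1 ≤ r) : ((r:ℚ)*((p:ℚ)-1) + (p:ℚ) + 1) ≠ 0 := by
  have hp2 : (2:ℚ) ≤ (p:ℚ) := by exact_mod_cast hp.two_le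
  have hr1 : (1:ℚ) ≤ (r:ℚ) := by exact_mod_cast hr
  nlinarith

lemma sub_inv (hp : p.Prime) (hr : 1 ≤ r) : MprSub p r * Nmat p r = 1 := by
  have hq0 : (p:ℚ) ≠ 0 := Nat.cast_ne_zero.2 hp.ne_zero
  have hq2 : (p:ℚ) + 1 ≠ 0 := by positivity
  have hα : (-1/(((p:ℚ)+1) * (p:ℚ)^(2*r-1))) ≠ 0 := by
    rw [div_ne_zero_iff]
    constructor
    · norm_num
    · positivity
  ext i j
  rw [Matrix.mul_apply, Matrix.one_apply]
  have hij : (i = j) ↔ (i.1 = j.1) := Subtype.ext_iff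
  have hiz : i.1 ≠ zeroF p r hp := fun h => i.2 (by rw [h]; rfl)
  have hjz : j.1 ≠ zeroF p r hp := fun h => j.2 (by rw [h]; rfl)
  -- h2 : weighted row sum over nonzero k
  have hzero : (∑ k : Fin (p^r), Mpr p r i.1 k *
      (if k = zeroF p r hp then (r:ℚ)*((p:ℚ)-1) + (p:ℚ) + 1 else gg p k)) = 0 := by
    have h0 := key hp hr i.1 (zeroF p r hp)
    rw [Finset.sum_congr rfl (fun k _ => by rw [Hmat_col0 hp k])] at h0
    rw [if_neg hiz] at h0
    have h1 : ∀ k : Fin (p^r), Mpr p r i.1 k *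
        ((-1/(((p:ℚ)+1) * (p:ℚ)^(2*r-1))) *
          (if k = zeroF p r hp then (r:ℚ)*((p:ℚ)-1) + (p:ℚ) + 1 else gg p k))
        = (-1/(((p:ℚ)+1) * (p:ℚ)^(2*r-1))) * (Mpr p r i.1 k *
          (if k = zeroF p r hp then (r:ℚ)*((p:ℚ)-1) + (p:ℚ) + 1 else gg p k)) := by
      intro k; ring
    rw [Finset.sum_congr rfl (fun k _ => h1 k), ← Finset.mul_sum] at h0
    rcases mul_eq_zero.1 h0 with h | h
    · exact absurd h hα
    · exact h
  have h2 : (∑ k : {x : Fin (p^r) // (x:ℕ) ≠ 0}, Mpr p r i.1 k.1 * gg p k.1)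
      = -(Mpr p r i.1 (zeroF p r hp) * ((r:ℚ)*((p:ℚ)-1) + (p:ℚ) + 1)) := by
    have hs := sum_split hp (fun x => Mpr p r i.1 x *
      (if x = zeroF p r hp then (r:ℚ)*((p:ℚ)-1) + (p:ℚ) + 1 else gg p x))
    rw [hzero, if_pos rfl] at hs
    have hpt : ∀ k : {x : Fin (p^r) // (x:ℕ) ≠ 0},
        Mpr p r i.1 k.1 * (if k.1 = zeroF p r hp then (r:ℚ)*((p:ℚ)-1) + (p:ℚ) + 1 else gg p k.1)
        = Mpr p r i.1 k.1 * gg p k.1 := by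
      intro k
      rw [if_neg (fun h => k.2 (by rw [h]; rfl))]
    rw [Finset.sum_congr rfl (fun k _ => hpt k)] at hs
    rw [hs]; ring
  have h1 : (∑ k : {x : Fin (p^r) // (x:ℕ) ≠ 0}, Mpr p r i.1 k.1 * Hmat p r k.1 j.1)
      = (if i.1 = j.1 then (1:ℚ) else 0) - Mpr p r i.1 (zeroF p r hp) * Hmat p r (zeroF p r hp) j.1 := by
    have hs := sum_split hp (fun x => Mpr p r i.1 x * Hmat p r x j.1)
    rw [key hp hr i.1 j.1] at hs
    exact hs
  calc (∑ k : {x : Fin (p^r) // (x:ℕ) ≠ 0}, MprSub p r i k * Nmat p r k j)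
      = (∑ k : {x : Fin (p^r) // (x:ℕ) ≠ 0}, (Mpr p r i.1 k.1 * Hmat p r k.1 j.1
          + (1/(((p:ℚ)+1) * (p:ℚ)^(2*r-1) * ((r:ℚ)*((p:ℚ)-1) + (p:ℚ) + 1)))
            * gg p j.1 * (Mpr p r i.1 k.1 * gg p k.1))) := by
        refine Finset.sum_congr rfl fun k _ => ?_
        rw [MprSub, Matrix.submatrix_apply, Nmat]
        ring
    _ = (if i.1 = j.1 then (1:ℚ) else 0) - Mpr p r i.1 (zeroF p r hp) * Hmat p r (zeroF p r hp) j.1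
        + (1/(((p:ℚ)+1) * (p:ℚ)^(2*r-1) * ((r:ℚ)*((p:ℚ)-1) + (p:ℚ) + 1)))
            * gg p j.1 * -(Mpr p r i.1 (zeroF p r hp) * ((r:ℚ)*((p:ℚ)-1) + (p:ℚ) + 1)) := by
        rw [Finset.sum_add_distrib, h1, ← Finset.mul_sum, h2]
    _ = if i = j then (1:ℚ) else 0 := by
        rw [Hmat_row0 hp j.1 hjz, show (if i.1 = j.1 then (1:ℚ) else 0) = (if i = j then (1:ℚ) else 0)
          from if_congr hij.symm rfl rfl]
        have hG := G0_ne (p := p) (r := r) hp hr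
        by_cases hc : i = j
        · rw [if_pos hc]
          field_simp
          ring
        · rw [if_neg hc]
          field_simp
          ring
end Sub

end Stmt12Proof

open Stmt12Proof in
/-- For a prime `p` and `r ≥ 1`, `M(p^r)_{1̂,1̂}` is invertible and, writing
`ℓ_i = ν_p(i)`, the `(i,j)` entry of its inverse equals
`−p^{1−2r} − ((p−1)/(p+1))·r·p^{1−2r} + p^{1−2r}·(ℓ_i·p − ℓ_i + p)²/((p+1)·(pr+p−r+1))`
if `i = j`, and
`−p^{1−2r}·(ν_p(i−j)·p + p − ν_p(i−j))/(p+1)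
  + p^{1−2r}·(ℓ_i·p + p − ℓ_i)·(ℓ_j·p + p − ℓ_j)/((p+1)·(pr+p−r+1))` otherwise. -/
theorem stmt12 (p r : ℕ) (hp : p.Prime) (hr : 1 ≤ r) :
    IsUnit (MprSub p r) ∧
    ∀ i j : {i : Fin (p ^ r) // (i : ℕ) ≠ 0}, (MprSub p r)⁻¹ i j =
      if i = j then
        -(p : ℚ) ^ (1 - 2 * (r : ℤ)) -
          (((p : ℚ) - 1) / ((p : ℚ) + 1)) * (r : ℚ) * (p : ℚ) ^ (1 - 2 * (r : ℤ)) +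
          (p : ℚ) ^ (1 - 2 * (r : ℤ)) *
            ((padicValNat p (i.1 : ℕ) : ℚ) * p - (padicValNat p (i.1 : ℕ) : ℚ) + p) ^ 2 /
            (((p : ℚ) + 1) * ((p : ℚ) * r + p - r + 1))
      else
        -(p : ℚ) ^ (1 - 2 * (r : ℤ)) *
            ((padicValInt p ((i.1 : ℤ) - (j.1 : ℤ)) : ℚ) * p + p -
              (padicValInt p ((i.1 : ℤ) - (j.1 : ℤ)) : ℚ)) / ((p : ℚ) + 1) +
          (p : ℚ) ^ (1 - 2 * (r : ℤ)) *
            ((padicValNat p (i.1 : ℕ) : ℚ) * p + p - (padicValNat p (i.1 : ℕ) : ℚ)) *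
            ((padicValNat p (j.1 : ℕ) : ℚ) * p + p - (padicValNat p (j.1 : ℕ) : ℚ)) /
            (((p : ℚ) + 1) * ((p : ℚ) * r + p - r + 1)) := by
  have hinv : MprSub p r * Nmat p r = 1 := sub_inv hp hr
  have hNM : Nmat p r * MprSub p r = 1 := mul_eq_one_comm.mp hinv
  refine ⟨⟨⟨MprSub p r, Nmat p r, hinv, hNM⟩, rfl⟩, ?_⟩
  intro i j
  rw [Matrix.inv_eq_right_inv hinv]
  have hq0 : (p:ℚ) ≠ 0 := Nat.cast_ne_zero.2 hp.ne_zero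
  have hq2 : (p:ℚ) + 1 ≠ 0 := by positivity
  have hG : ((r:ℚ)*((p:ℚ)-1) + (p:ℚ) + 1) ≠ 0 := G0_ne hp hr
  have hG2 : ((p : ℚ) * r + p - r + 1) ≠ 0 := by
    intro h; exact hG (by linear_combination h)
  have hpow : ((p:ℚ))^(2*r-1) ≠ 0 := pow_ne_zero _ hq0
  have hz : ((p:ℚ))^(1-2*(r:ℤ)) = 1/((p:ℚ)^(2*r-1)) := by
    have h1 : (1 - 2*(r:ℤ)) = -(((2*r-1:ℕ)):ℤ) := by
      rw [Nat.cast_sub (by omega : 1 ≤ 2*r)]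
      push_cast; ring
    rw [h1, zpow_neg, zpow_natCast, one_div]
  by_cases hc : i = j
  · rw [if_pos hc]
    subst hc
    simp only [Nmat, Hmat, if_pos rfl, gg, ↓reduceIte]
    rw [hz]
    have hG3 : ((p:ℚ) * ((r:ℚ) + 1) - (r:ℚ) + 1) ≠ 0 := by
      intro h; exact hG (by linear_combination h)
    field_simp
    ring
  · rw [if_neg hc]
    have hc1 : i.1 ≠ j.1 := fun h => hc (Subtype.ext h)
    simp only [Nmat, Hmat, if_neg hc1, gg]
    rw [hz]
    field_simp
    ring
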